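/- Let p, q be positive real numbers with p ≤ q such that S([p,q]) is a non proper numerical semigroup. Then there exists a unique maximal open interval ]p̂,q̂[ (with respect to inclusion, possibly with q̂ = ∞) such that [p,q] ⊆ ]p̂,q̂[ and S(]p̂,q̂[) = S([p,q]); that is, there is an open interval ]p̂,q̂[ containing [p,q] with S(]p̂,q̂[) = S([p,q]) which contains every open interval J with [p,q] ⊆ J and S(J) = S([p,q]). -/
import Mathlib


/-- The numerical semigroup `𝒮(I) = ⋃_{k∈ℕ} k·I ∩ ℕ` generated by a real interval `I`. -/
def NSet (I : Set ℝ) : Set ℕ := {m | ∃ k : ℕ, ∃ r ∈ I, (m : ℝ) = (k : ℝ) * r}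

/-- An open interval of `ℝ`, possibly unbounded above (`q̂ = ∞`). -/
def IsOpenInterval (J : Set ℝ) : Prop := (∃ a c : ℝ, J = Set.Ioo a c) ∨ (∃ a : ℝ, J = Set.Ioi a)

lemma NSet.mono {I J : Set ℝ} (h : I ⊆ J) : NSet I ⊆ NSet J := by
  rintro m ⟨k, r, hr, hm⟩; exact ⟨k, r, h hr, hm⟩

lemma zero_mem_NSet {I : Set ℝ} (h : I.Nonempty) : 0 ∈ NSet I := by
  obtain ⟨r, hr⟩ := h
  exact ⟨0, r, hr, by simp⟩

lemma mem_NSet_of_div {I : Set ℝ} (m k : ℕ) (hk : 0 < k) (h : (m : ℝ)/k ∈ I) :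
    m ∈ NSet I := by
  refine ⟨k, (m : ℝ)/k, h, ?_⟩
  have : (k : ℝ) ≠ 0 := by positivity
  field_simp

lemma exists_valid_open (p q : ℝ) (hp : 0 < p) (hpq : p ≤ q)
    (hfin : ((NSet (Set.Icc p q))ᶜ).Finite) :
    ∃ δ > 0, δ < p ∧ NSet (Set.Ioo (p - δ) (q + δ)) = NSet (Set.Icc p q) := by
  classical
  set S := NSet (Set.Icc p q) with hS
  have hscale : ∀ (m k : ℕ), 0 < k → (k : ℝ) * p ≤ m → (m : ℝ) ≤ k * q → m ∈ S := by
    intro m k hk h1 h2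
    have hk' : (0:ℝ) < k := by exact_mod_cast hk
    refine mem_NSet_of_div m k hk ⟨?_, ?_⟩
    · rw [le_div_iff₀ hk']; linarith
    · rw [div_le_iff₀ hk']; linarith
  set T := hfin.toFinset with hT
  set M : ℕ := T.sup id with hM
  set K : ℕ := ⌈(2 * M) / p⌉₊ with hK
  set g : ℕ × ℕ → ℝ := fun mk =>
    if (mk.1 : ℝ) < mk.2 * p then ((mk.2 : ℝ) * p - mk.1) / mk.2
    else ((mk.1 : ℝ) - mk.2 * q) / mk.2 with hg
  set D : Finset ℝ := insert (p/2) ((T ×ˢ Finset.Icc 1 K).image g) with hD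
  have hDne : D.Nonempty := ⟨p/2, Finset.mem_insert_self _ _⟩
  set δ := D.min' hDne with hδ
  have hmem_pos : ∀ x ∈ D, 0 < x := by
    intro x hx
    rcases Finset.mem_insert.mp hx with h | h
    · subst h; positivity
    · obtain ⟨⟨m, k⟩, hmk, rfl⟩ := Finset.mem_image.mp h
      obtain ⟨hmT, hkK⟩ := Finset.mem_product.mp hmk
      have hk1 : 1 ≤ k := (Finset.mem_Icc.mp hkK).1
      have hkpos : (0:ℝ) < k := by exact_mod_cast hk1
      have hmS : m ∉ S := by
        have := (Set.Finite.mem_toFinset hfin).mp hmT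
        simpa using this
      simp only [hg]
      split_ifs with h
      · exact div_pos (by linarith) hkpos
      · have hkq : (k : ℝ) * q < m := by
          by_contra hle
          exact hmS (hscale m k hk1 (not_lt.mp h) (not_lt.mp hle))
        exact div_pos (by linarith) hkpos
  have hδpos : (0:ℝ) < δ := hmem_pos _ (D.min'_mem hDne)
  have hδle : δ ≤ p/2 := D.min'_le _ (Finset.mem_insert_self _ _)
  refine ⟨δ, hδpos, by linarith, ?_⟩
  apply Set.Subset.antisymm
  · rintro m ⟨k, r, ⟨hr1, hr2⟩, hm⟩
    rcases Nat.eq_zero_or_pos k with rfl | hk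
    · have : (m : ℝ) = 0 := by simpa using hm
      have : m = 0 := by exact_mod_cast this
      subst this
      exact zero_mem_NSet ⟨p, le_refl p, hpq⟩
    by_contra hmS
    have hkpos : (0:ℝ) < k := by exact_mod_cast hk
    have h1 : (k : ℝ) * (p - δ) < m := by rw [hm]; nlinarith
    have h2 : (m : ℝ) < k * (q + δ) := by rw [hm]; nlinarith
    have hmT : m ∈ T := (Set.Finite.mem_toFinset hfin).mpr (by simpa using hmS)
    have hmM : m ≤ M := Finset.le_sup (f := id) hmT
    have hkK : (k : ℝ) < K := by
      have h3 : (k : ℝ) * (p/2) < m := by nlinarith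
      have h4 : (k : ℝ) < 2 * m / p := by
        rw [lt_div_iff₀ hp]; nlinarith
      have h5 : (2 * (m:ℝ)) / p ≤ (2 * (M:ℝ)) / p := by
        have hmM' : (m:ℝ) ≤ (M:ℝ) := by exact_mod_cast hmM
        gcongr
      calc (k : ℝ) < 2 * m / p := h4
        _ ≤ 2 * M / p := h5
        _ ≤ K := by
            have := Nat.le_ceil ((2 * (M:ℝ)) / p)
            simpa [hK] using this
    have hkK' : k ≤ K := by
      have : k < K := by exact_mod_cast hkK
      exact this.le
    have hpair : (m, k) ∈ T ×ˢ Finset.Icc 1 K :=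
      Finset.mem_product.mpr ⟨hmT, Finset.mem_Icc.mpr ⟨hk, hkK'⟩⟩
    have hδg : δ ≤ g (m, k) := D.min'_le _ (Finset.mem_insert.mpr (Or.inr
      (Finset.mem_image.mpr ⟨(m, k), hpair, rfl⟩)))
    simp only [hg] at hδg
    split_ifs at hδg with hcase
    · rw [le_div_iff₀ hkpos] at hδg
      nlinarith
    · have hkq : (k : ℝ) * q < m := by
        by_contra hle
        exact hmS (hscale m k hk (not_lt.mp hcase) (not_lt.mp hle))
      rw [le_div_iff₀ hkpos] at hδg
      nlinarith
  · apply NSet.mono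
    intro x hx
    exact ⟨by linarith [hx.1], by linarith [hx.2]⟩

/-- **Lemma.** For `0 < p ≤ q` with `𝒮([p,q])` a non proper numerical semigroup, there is a
unique maximal open interval `]p̂,q̂[` (possibly with `q̂ = ∞`) containing `[p,q]` with
`𝒮(]p̂,q̂[) = 𝒮([p,q])`: it contains every open interval `J ⊇ [p,q]` with `𝒮(J) = 𝒮([p,q])`. -/
theorem stmt9 (p q : ℝ) (hp : 0 < p) (hpq : p ≤ q)
    (hfin : ((NSet (Set.Icc p q))ᶜ).Finite)
    (hproper : NSet (Set.Icc p q) ≠ Set.univ) :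
    ∃ J : Set ℝ, IsOpenInterval J ∧ Set.Icc p q ⊆ J ∧ NSet J = NSet (Set.Icc p q) ∧
      ∀ J' : Set ℝ, IsOpenInterval J' → Set.Icc p q ⊆ J' →
        NSet J' = NSet (Set.Icc p q) → J' ⊆ J := by
  classical
  set S := NSet (Set.Icc p q) with hS
  obtain ⟨δ, hδ0, hδp, hJ0⟩ := exists_valid_open p q hp hpq hfin
  set 𝒥 : Set (Set ℝ) := {J' | IsOpenInterval J' ∧ Set.Icc p q ⊆ J' ∧ NSet J' = S} with h𝒥
  have hJ0mem : Set.Ioo (p - δ) (q + δ) ∈ 𝒥 :=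
    ⟨Or.inl ⟨_, _, rfl⟩, fun x hx => ⟨by linarith [hx.1], by linarith [hx.2]⟩, hJ0⟩
  set J := ⋃₀ 𝒥 with hJdef
  have hsub : Set.Icc p q ⊆ J :=
    fun x hx => ⟨_, hJ0mem, ⟨by linarith [hx.1], by linarith [hx.2]⟩⟩
  have hpJ : p ∈ J := hsub ⟨le_refl p, hpq⟩
  have hne : J.Nonempty := ⟨p, hpJ⟩
  -- every member of 𝒥 lies in (0, ∞)
  have hmemPos : ∀ J' ∈ 𝒥, J' ⊆ Set.Ioi 0 := by
    rintro J' ⟨hop, hsub', hNS⟩ x hx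
    by_contra hx0
    simp only [Set.mem_Ioi, not_lt] at hx0
    have hpJ' : p ∈ J' := hsub' ⟨le_refl p, hpq⟩
    have hIoc : Set.Ioc 0 p ⊆ J' := by
      intro t ht
      rcases hop with ⟨a, c, rfl⟩ | ⟨a, rfl⟩
      · exact ⟨lt_of_lt_of_le hx.1 (le_trans hx0 ht.1.le), lt_of_le_of_lt ht.2 hpJ'.2⟩
      · exact lt_of_lt_of_le hx (le_trans hx0 ht.1.le)
    have huniv : NSet J' = Set.univ := by
      ext m
      simp only [Set.mem_univ, iff_true]
      rcases Nat.eq_zero_or_pos m with rfl | hm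
      · exact zero_mem_NSet ⟨p, hpJ'⟩
      · set k := ⌈(m : ℝ) / p⌉₊ with hk
        have hm' : (0:ℝ) < m := by exact_mod_cast hm
        have hk0 : 0 < k := Nat.ceil_pos.mpr (by positivity)
        have hk0' : (0:ℝ) < k := by exact_mod_cast hk0
        apply mem_NSet_of_div m k hk0
        apply hIoc
        constructor
        · positivity
        · rw [div_le_iff₀ hk0']
          have h1 := Nat.le_ceil ((m : ℝ) / p)
          rw [div_le_iff₀ hp] at h1
          calc (m:ℝ) ≤ ⌈(m : ℝ) / p⌉₊ * p := h1
            _ = p * k := by rw [hk]; ring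
    exact hproper (hNS.symm.trans huniv)
  have hJpos : J ⊆ Set.Ioi 0 := by
    rintro x ⟨J', hJ', hx⟩
    exact hmemPos J' hJ' hx
  have hbdd : BddBelow J := ⟨0, fun x hx => (hJpos hx).le⟩
  -- everyone in J has smaller and larger neighbors in J
  have hlt_of_mem : ∀ x ∈ J, ∃ y ∈ J, y < x := by
    rintro x ⟨J', hJ'𝒥, hx⟩
    have hop := hJ'𝒥.1
    rcases hop with ⟨a, c, hEq⟩ | ⟨a, hEq⟩
    · rw [hEq] at hx
      refine ⟨(a + x)/2, ⟨J', hJ'𝒥, ?_⟩, by linarith [hx.1]⟩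
      rw [hEq]
      exact ⟨by linarith [hx.1], by linarith [hx.1, hx.2]⟩
    · rw [hEq] at hx
      simp only [Set.mem_Ioi] at hx
      refine ⟨(a + x)/2, ⟨J', hJ'𝒥, ?_⟩, by linarith⟩
      rw [hEq]
      simp only [Set.mem_Ioi]
      linarith
  have hgt_of_mem : ∀ x ∈ J, ∃ z ∈ J, x < z := by
    rintro x ⟨J', hJ'𝒥, hx⟩
    have hop := hJ'𝒥.1
    rcases hop with ⟨a, c, hEq⟩ | ⟨a, hEq⟩
    · rw [hEq] at hx
      refine ⟨(x + c)/2, ⟨J', hJ'𝒥, ?_⟩, by linarith [hx.2]⟩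
      rw [hEq]
      exact ⟨by linarith [hx.1, hx.2], by linarith [hx.2]⟩
    · rw [hEq] at hx
      simp only [Set.mem_Ioi] at hx
      refine ⟨x + 1, ⟨J', hJ'𝒥, ?_⟩, by linarith⟩
      rw [hEq]
      simp only [Set.mem_Ioi]
      linarith
  -- points squeezed between members of J are in J
  have hmid : ∀ x : ℝ, (∃ y ∈ J, y < x) → (∃ z ∈ J, x < z) → x ∈ J := by
    rintro x ⟨y, ⟨Jy, hJy, hyJ⟩, hyx⟩ ⟨z, ⟨Jz, hJz, hzJ⟩, hxz⟩
    rcases le_total x p with hxp | hpx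
    · refine ⟨Jy, hJy, ?_⟩
      obtain ⟨hop, hsub', -⟩ := hJy
      have hpJy : p ∈ Jy := hsub' ⟨le_refl p, hpq⟩
      rcases hop with ⟨a, c, hEq⟩ | ⟨a, hEq⟩
      · rw [hEq] at hyJ hpJy ⊢
        exact ⟨lt_trans hyJ.1 hyx, lt_of_le_of_lt hxp hpJy.2⟩
      · rw [hEq] at hyJ ⊢
        exact lt_trans hyJ hyx
    · refine ⟨Jz, hJz, ?_⟩
      obtain ⟨hop, hsub', -⟩ := hJz
      have hpJz : p ∈ Jz := hsub' ⟨le_refl p, hpq⟩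
      rcases hop with ⟨a, c, hEq⟩ | ⟨a, hEq⟩
      · rw [hEq] at hzJ hpJz ⊢
        exact ⟨lt_of_lt_of_le hpJz.1 hpx, lt_trans hxz hzJ.2⟩
      · rw [hEq] at hpJz ⊢
        exact lt_of_lt_of_le hpJz hpx
  have hNJ : NSet J = S := by
    apply Set.Subset.antisymm
    · rintro m ⟨k, r, ⟨J', hJ', hr⟩, hm⟩
      exact hJ'.2.2 ▸ ⟨k, r, hr, hm⟩
    · intro m hm
      have hm' : m ∈ NSet (Set.Ioo (p - δ) (q + δ)) := by rw [hJ0]; exact hm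
      exact NSet.mono (Set.subset_sUnion_of_mem hJ0mem) hm'
  have hIJ : IsOpenInterval J := by
    by_cases hab : BddAbove J
    · left
      refine ⟨sInf J, sSup J, Set.Subset.antisymm ?_ ?_⟩
      · intro x hx
        obtain ⟨y, hy, hyx⟩ := hlt_of_mem x hx
        obtain ⟨z, hz, hxz⟩ := hgt_of_mem x hx
        exact ⟨lt_of_le_of_lt (csInf_le hbdd hy) hyx, lt_of_lt_of_le hxz (le_csSup hab hz)⟩
      · intro x hx
        exact hmid x (exists_lt_of_csInf_lt hne hx.1) (exists_lt_of_lt_csSup hne hx.2)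
    · right
      refine ⟨sInf J, Set.Subset.antisymm ?_ ?_⟩
      · intro x hx
        obtain ⟨y, hy, hyx⟩ := hlt_of_mem x hx
        exact lt_of_le_of_lt (csInf_le hbdd hy) hyx
      · intro x hx
        have hz : ∃ z ∈ J, x < z := by
          rcases not_bddAbove_iff.mp hab x with ⟨z, hz, hxz⟩
          exact ⟨z, hz, hxz⟩
        exact hmid x (exists_lt_of_csInf_lt hne hx) hz
  exact ⟨J, hIJ, hsub, hNJ, fun J' h1 h2 h3 => Set.subset_sUnion_of_mem ⟨h1, h2, h3⟩⟩
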